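/- Effect-inducing cases: for all words u, v, z over the alphabet {⟨, ⟩}: (i) if r(uv) ≤ ℓ(z), then ℓ((u⟩v)·z) = ℓ((uv)·z) + 1 and r((u⟩v)·z) = r((uv)·z); (ii) if r(z) > ℓ(uv), then ℓ(z·(u⟩v)) = ℓ(z·(uv)) and r(z·(u⟩v)) = r(z·(uv)) − 1. In both cases the effect of inserting a closing parenthesis on the concatenation is determined independently of its effect on the changed part. -/
import Mathlib


/-- The alphabet `Σ_k` of `k` types of opening (`op`) and closing (`cl`) parentheses. -/
inductive Par (k : ℕ) where
  | op : Fin k → Par k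
  | cl : Fin k → Par k
deriving DecidableEq

namespace Par

/-- One step of the type-unaware reduction: `μ_u(zσ)` computed from `μ_u(z)`. -/
def muUStep {k : ℕ} (z : List (Par k)) (σ : Par k) : List (Par k) :=
  match z.getLast?, σ with
  | some (op _), cl _ => z.dropLast
  | _, _ => z ++ [σ]

/-- The type-unaware reduction `μ_u`. -/
def muU {k : ℕ} (w : List (Par k)) : List (Par k) := w.foldl muUStep []

/-- One step of the type-aware reduction: cancellation requires matching types. -/
def muAStep {k : ℕ} (z : List (Par k)) (σ : Par k) : List (Par k) :=
  match z.getLast?, σ with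
  | some (op i), cl j => if i = j then z.dropLast else z ++ [σ]
  | _, _ => z ++ [σ]

/-- The type-aware reduction `μ_a`. -/
def muA {k : ℕ} (w : List (Par k)) : List (Par k) := w.foldl muAStep []

/-- Is the symbol a closing parenthesis? -/
def isCl {k : ℕ} : Par k → Bool
  | cl _ => true
  | _ => false

/-- Is the symbol an opening parenthesis? -/
def isOp {k : ℕ} : Par k → Bool
  | op _ => true
  | _ => false

/-- `ℓ(w)`: the number of unmatched closing parentheses of `w`. -/
def ell {k : ℕ} (w : List (Par k)) : ℕ := (muU w).countP isCl

/-- `r(w)`: the number of unmatched opening parentheses of `w`. -/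
def rr {k : ℕ} (w : List (Par k)) : ℕ := (muU w).countP isOp

/-- The Dyck language `D_k`: smallest set containing `ε`, closed under
concatenation, and containing `⟨_i w ⟩_i` whenever it contains `w`. -/
inductive Dyck {k : ℕ} : List (Par k) → Prop where
  | nil : Dyck []
  | append {u v : List (Par k)} : Dyck u → Dyck v → Dyck (u ++ v)
  | wrap {w : List (Par k)} (i : Fin k) : Dyck w → Dyck (op i :: w ++ [cl i])

end Par

namespace Par

/-- Pair version of one reduction step: tracks `(ℓ, r)`. -/
def stepP {k : ℕ} : ℕ × ℕ → Par k → ℕ × ℕ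
  | (l, r), op _ => (l, r + 1)
  | (l, 0), cl _ => (l + 1, 0)
  | (l, r + 1), cl _ => (l, r)

/-- Compute `(ℓ(w), r(w))` directly. -/
def cnt {k : ℕ} (w : List (Par k)) : ℕ × ℕ := w.foldl stepP (0, 0)

lemma stepP_op {k : ℕ} (p : ℕ × ℕ) (i : Fin k) :
    stepP p (op i) = (p.1, p.2 + 1) := by
  obtain ⟨l, r⟩ := p; simp [stepP]

lemma stepP_cl {k : ℕ} (p : ℕ × ℕ) (i : Fin k) :
    stepP p (cl i) = if p.2 = 0 then (p.1 + 1, 0) else (p.1, p.2 - 1) := by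
  obtain ⟨l, r⟩ := p
  rcases r with _ | s <;> simp [stepP]

lemma muU_concat {k : ℕ} (w : List (Par k)) (σ : Par k) :
    muU (w ++ [σ]) = muUStep (muU w) σ := by
  simp [muU, List.foldl_append]

lemma cnt_concat {k : ℕ} (w : List (Par k)) (σ : Par k) :
    cnt (w ++ [σ]) = stepP (cnt w) σ := by
  simp [cnt, List.foldl_append]

lemma par1_cases (σ : Par 1) : σ = op 0 ∨ σ = cl 0 := by
  cases σ with
  | op i => left; congr; exact Subsingleton.elim _ _
  | cl i => right; congr; exact Subsingleton.elim _ _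

lemma muU_canon (w : List (Par 1)) :
    muU w = List.replicate (cnt w).1 (cl 0) ++ List.replicate (cnt w).2 (op 0) := by
  induction w using List.reverseRecOn with
  | nil => simp [muU, cnt]
  | append_singleton w σ ih =>
    rw [muU_concat, cnt_concat, ih]
    generalize cnt w = p
    obtain ⟨l, r⟩ := p
    rcases par1_cases σ with rfl | rfl
    · -- appending an opening parenthesis
      have h : muUStep (List.replicate l (cl (0 : Fin 1)) ++ List.replicate r (op 0)) (op 0)
          = (List.replicate l (cl (0 : Fin 1)) ++ List.replicate r (op 0)) ++ [op 0] := by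
        unfold muUStep
        rcases r with _ | s
        · rcases l with _ | m
          · rfl
          · rw [show List.replicate (m+1) (cl (0 : Fin 1)) ++ List.replicate 0 (op 0)
                = List.replicate m (cl (0 : Fin 1)) ++ [cl (0 : Fin 1)] by
                  simp [List.replicate_succ']]
            simp [List.getLast?_concat]
        · rw [show List.replicate l (cl (0 : Fin 1)) ++ List.replicate (s+1) (op 0)
              = (List.replicate l (cl (0 : Fin 1)) ++ List.replicate s (op 0)) ++ [op 0] by
                simp [List.replicate_succ']]
          simp [List.getLast?_concat]
      rw [h, stepP_op]
      simp [List.replicate_succ' (n := r)]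
    · -- appending a closing parenthesis
      rcases r with _ | s
      · have h : muUStep (List.replicate l (cl (0 : Fin 1)) ++ List.replicate 0 (op 0)) (cl 0)
            = (List.replicate l (cl (0 : Fin 1)) ++ List.replicate 0 (op 0)) ++ [cl 0] := by
          unfold muUStep
          rcases l with _ | m
          · rfl
          · rw [show List.replicate (m+1) (cl (0 : Fin 1)) ++ List.replicate 0 (op 0)
                = List.replicate m (cl (0 : Fin 1)) ++ [cl (0 : Fin 1)] by
                  simp [List.replicate_succ']]
            simp [List.getLast?_concat]
        rw [h, stepP_cl]
        simp [List.replicate_succ' (n := l)]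
      · have e : List.replicate l (cl (0 : Fin 1)) ++ List.replicate (s+1) (op 0)
            = (List.replicate l (cl (0 : Fin 1)) ++ List.replicate s (op 0)) ++ [op 0] := by
          simp [List.replicate_succ']
        have h : muUStep (List.replicate l (cl (0 : Fin 1)) ++ List.replicate (s+1) (op 0))
              (cl 0)
            = List.replicate l (cl (0 : Fin 1)) ++ List.replicate s (op 0) := by
          unfold muUStep
          rw [e]
          simp [List.getLast?_concat]
        rw [h, stepP_cl]
        simp

lemma ell_eq (w : List (Par 1)) : ell w = (cnt w).1 := by
  rw [ell, muU_canon]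
  simp [List.countP_append, List.countP_replicate, isCl]

lemma rr_eq (w : List (Par 1)) : rr w = (cnt w).2 := by
  rw [rr, muU_canon]
  simp [List.countP_append, List.countP_replicate, isOp, isCl]

/-- Combination rule for counts of a concatenation. -/
def combP (p q : ℕ × ℕ) : ℕ × ℕ := (p.1 + (q.1 - p.2), q.2 + (p.2 - q.1))

lemma stepP_combP {k : ℕ} (p q : ℕ × ℕ) (σ : Par k) :
    stepP (combP p q) σ = combP p (stepP q σ) := by
  obtain ⟨a, b⟩ := p
  obtain ⟨c, d⟩ := q
  cases σ with
  | op i =>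
    simp [stepP_op, combP]
    omega
  | cl i =>
    simp only [stepP_cl, combP]
    split_ifs <;> simp <;> omega

lemma cnt_append {k : ℕ} (w z : List (Par k)) :
    cnt (w ++ z) = combP (cnt w) (cnt z) := by
  induction z using List.reverseRecOn with
  | nil => simp [combP, cnt]
  | append_singleton z σ ih =>
    rw [← List.append_assoc, cnt_concat, cnt_concat, ih, stepP_combP]

lemma ell_append (w z : List (Par 1)) :
    ell (w ++ z) = ell w + (ell z - rr w) := by
  rw [ell_eq, ell_eq, ell_eq, rr_eq, cnt_append]; rfl

lemma rr_append (w z : List (Par 1)) :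
    rr (w ++ z) = rr z + (rr w - ell z) := by
  rw [rr_eq, rr_eq, rr_eq, ell_eq, cnt_append]; rfl

/-- Inserting a closing parenthesis either increments `ℓ` keeping `r`,
or decrements `r` keeping `ℓ` (the latter only when `r ≥ 1`). -/
lemma insert_cl_dichotomy (u v : List (Par 1)) :
    (ell (u ++ cl 0 :: v) = ell (u ++ v) + 1 ∧ rr (u ++ cl 0 :: v) = rr (u ++ v)) ∨
    (ell (u ++ cl 0 :: v) = ell (u ++ v) ∧ rr (u ++ cl 0 :: v) = rr (u ++ v) - 1
      ∧ 1 ≤ rr (u ++ v)) := by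
  have e : u ++ cl (0 : Fin 1) :: v = (u ++ [cl (0 : Fin 1)]) ++ v := by simp
  rw [e, ell_append (u ++ [cl (0 : Fin 1)]) v, rr_append (u ++ [cl (0 : Fin 1)]) v,
      ell_append u v, rr_append u v,
      ell_eq (u ++ [cl (0 : Fin 1)]), rr_eq (u ++ [cl (0 : Fin 1)]), cnt_concat,
      ell_eq u, rr_eq u, stepP_cl]
  split_ifs with h <;> dsimp only <;> omega

end Par

/-- effect-inducing cases. (i) if `r(uv) ≤ ℓ(z)` then inserting a
closing parenthesis into the left part increases `ℓ` of the concatenation by one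
and keeps `r`; (ii) if `r(z) > ℓ(uv)` then inserting it into the right part keeps
`ℓ` of the concatenation and decreases `r` by one. -/
theorem effect_inducing (u v z : List (Par 1)) :
    (Par.rr (u ++ v) ≤ Par.ell z →
      Par.ell ((u ++ Par.cl 0 :: v) ++ z) = Par.ell ((u ++ v) ++ z) + 1 ∧
      Par.rr ((u ++ Par.cl 0 :: v) ++ z) = Par.rr ((u ++ v) ++ z)) ∧
    (Par.ell (u ++ v) < Par.rr z →
      Par.ell (z ++ (u ++ Par.cl 0 :: v)) = Par.ell (z ++ (u ++ v)) ∧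
      Par.rr (z ++ (u ++ Par.cl 0 :: v)) = Par.rr (z ++ (u ++ v)) - 1 ∧
      1 ≤ Par.rr (z ++ (u ++ v))) := by
  have e1 := Par.ell_append (u ++ Par.cl 0 :: v) z
  have e2 := Par.rr_append (u ++ Par.cl 0 :: v) z
  have e3 := Par.ell_append (u ++ v) z
  have e4 := Par.rr_append (u ++ v) z
  have e5 := Par.ell_append z (u ++ Par.cl 0 :: v)
  have e6 := Par.rr_append z (u ++ Par.cl 0 :: v)
  have e7 := Par.ell_append z (u ++ v)
  have e8 := Par.rr_append z (u ++ v)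
  obtain ⟨h1, h2⟩ | ⟨h1, h2, h3⟩ := Par.insert_cl_dichotomy u v <;>
    constructor <;> intro h <;> omega
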